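/- Let γ > 0, let γ_1 ≥ … ≥ γ_r > 0, K = K_P + K_S with K_P ≥ r, and define f_1'(γ) = −r K_S log γ + K Σ_{i=1}^r log(γK/(γγ_i + λ̂_i(γ))) + K_S Σ_{i=1}^r log λ̂_i(γ), where λ̂_i(γ) = max(K_S γγ_i/K_P, 1). Then f_1' is nondecreasing on (0, ∞): its derivative is strictly positive for γ < (K_P/K_S)(1/γ_r) and equals zero for γ ≥ (K_P/K_S)(1/γ_r). -/

import Mathlib

open Finset Set Filter

private lemma aux_gA (Kt a : ℝ) (hKt : 0 < Kt) (ha : 0 < a) (γ : ℝ) (hγ : 0 < γ) :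
    HasDerivAt (fun x => Kt * Real.log (x * Kt / (x * a + 1)))
      (Kt / (γ * (γ * a + 1))) γ := by
  have h1 : 0 < γ * a + 1 := by positivity
  have hA : HasDerivAt (fun x : ℝ => x * a + 1) a γ := by
    simpa using ((hasDerivAt_id γ).mul_const a).add_const 1
  have hlogA : HasDerivAt (fun x => Real.log (x * a + 1)) ((γ * a + 1)⁻¹ * a) γ :=
    by have := (Real.hasDerivAt_log h1.ne').comp γ hA; exact this
  have hmain : HasDerivAt (fun x => Kt * (Real.log x + Real.log Kt - Real.log (x * a + 1)))
      (Kt * (γ⁻¹ - (γ * a + 1)⁻¹ * a)) γ :=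
    (((Real.hasDerivAt_log hγ.ne').add_const _).sub hlogA).const_mul Kt
  have hval : Kt * (γ⁻¹ - (γ * a + 1)⁻¹ * a) = Kt / (γ * (γ * a + 1)) := by
    field_simp
    ring
  rw [← hval]
  refine hmain.congr_of_eventuallyEq ?_
  refine Filter.eventuallyEq_of_mem (Ioi_mem_nhds hγ) fun x hx => ?_
  have hx : (0:ℝ) < x := hx
  have hx1 : 0 < x * a + 1 := by positivity
  rw [Real.log_div (by positivity) hx1.ne', Real.log_mul hx.ne' hKt.ne']

private lemma aux_gB (Kt S a c : ℝ) (ha : 0 < a) (hc : 0 < c) (γ : ℝ) (hγ : 0 < γ) :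
    HasDerivAt (fun x => Kt * Real.log (x * Kt / (x * a + c * x)) + S * Real.log (c * x))
      (S / γ) γ := by
  have hd : HasDerivAt
      (fun x => Kt * Real.log (Kt / (a + c)) + (S * Real.log c + S * Real.log x))
      (S * γ⁻¹) γ :=
    (((Real.hasDerivAt_log hγ.ne').const_mul S).const_add _).const_add _
  rw [div_eq_mul_inv]
  refine hd.congr_of_eventuallyEq ?_
  refine Filter.eventuallyEq_of_mem (Ioi_mem_nhds hγ) fun x hx => ?_
  have hx : (0:ℝ) < x := hx
  have h1 : x * a + c * x = x * (a + c) := by ring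
  rw [h1, mul_div_mul_left _ _ hx.ne', Real.log_mul hc.ne' hx.ne']
  ring

private lemma perIndex (P S Kt a : ℝ) (hP : 0 < P) (hS : 0 < S) (ha : 0 < a)
    (hKt : Kt = P + S) (γ : ℝ) (hγ : 0 < γ) :
    HasDerivAt (fun x => Kt * Real.log (x * Kt / (x * a + max (S * x * a / P) 1)) +
      S * Real.log (max (S * x * a / P) 1))
      (if P ≤ S * γ * a then S / γ else Kt / (γ * (γ * a + 1))) γ := by
  have hKt0 : 0 < Kt := by rw [hKt]; positivity
  set c : ℝ := S * a / P with hc_def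
  have hc : 0 < c := by positivity
  -- pointwise identifications
  have hA_eq : ∀ x : ℝ, S * x * a / P ≤ 1 →
      Kt * Real.log (x * Kt / (x * a + max (S * x * a / P) 1)) +
        S * Real.log (max (S * x * a / P) 1)
      = Kt * Real.log (x * Kt / (x * a + 1)) := by
    intro x hx
    rw [max_eq_right hx, Real.log_one, mul_zero, add_zero]
  have hB_eq : ∀ x : ℝ, 1 ≤ S * x * a / P →
      Kt * Real.log (x * Kt / (x * a + max (S * x * a / P) 1)) +
        S * Real.log (max (S * x * a / P) 1)
      = Kt * Real.log (x * Kt / (x * a + c * x)) + S * Real.log (c * x) := by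
    intro x hx
    have hcx : S * x * a / P = c * x := by
      rw [hc_def]; field_simp
    rw [max_eq_left hx, hcx]
  rcases lt_trichotomy (S * γ * a / P) 1 with hlt | heq | hgt
  · -- strictly unsaturated
    have hcond : ¬ P ≤ S * γ * a := by
      rw [div_lt_one hP] at hlt; linarith
    rw [if_neg hcond]
    have hev : ∀ᶠ x in nhds γ, S * x * a / P < 1 := by
      have hcont : ContinuousAt (fun x : ℝ => S * x * a / P) γ := by fun_prop
      exact hcont.eventually_lt continuousAt_const hlt
    exact (aux_gA Kt a hKt0 ha γ hγ).congr_of_eventuallyEq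
      (hev.mono fun x hx => hA_eq x hx.le)
  · -- the kink
    have hPeq : S * γ * a = P := by
      field_simp at heq; linarith
    have hcond : P ≤ S * γ * a := hPeq.ge
    rw [if_pos hcond]
    have hval : Kt / (γ * (γ * a + 1)) = S / γ := by
      rw [div_eq_div_iff (by positivity : (0:ℝ) < γ * (γ * a + 1)).ne' hγ.ne']
      rw [hKt]; nlinarith [hPeq]
    have hIic : HasDerivWithinAt (fun x => Kt * Real.log (x * Kt /
        (x * a + max (S * x * a / P) 1)) + S * Real.log (max (S * x * a / P) 1))
        (S / γ) (Iic γ) γ := by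
      rw [← hval]
      refine ((aux_gA Kt a hKt0 ha γ hγ).hasDerivWithinAt).congr
        (fun x hx => hA_eq x ?_) (hA_eq γ (by rw [heq]))
      have : S * x * a / P = (S * a / P) * x := by field_simp
      have hγeq : S * γ * a / P = (S * a / P) * γ := by field_simp
      rw [this]
      calc (S * a / P) * x ≤ (S * a / P) * γ := by
            apply mul_le_mul_of_nonneg_left hx (by positivity)
        _ = 1 := by rw [← hγeq, heq]
    have hIci : HasDerivWithinAt (fun x => Kt * Real.log (x * Kt /
        (x * a + max (S * x * a / P) 1)) + S * Real.log (max (S * x * a / P) 1))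
        (S / γ) (Ici γ) γ := by
      refine ((aux_gB Kt S a c ha hc γ hγ).hasDerivWithinAt).congr
        (fun x hx => hB_eq x ?_) (hB_eq γ heq.ge)
      have hxx : S * x * a / P = (S * a / P) * x := by field_simp
      have hγeq : S * γ * a / P = (S * a / P) * γ := by field_simp
      rw [hxx]
      calc (1:ℝ) = (S * a / P) * γ := by rw [← hγeq, heq]
        _ ≤ (S * a / P) * x := by
            apply mul_le_mul_of_nonneg_left hx (by positivity)
    have := hIic.union hIci
    rw [Iic_union_Ici] at this
    exact hasDerivWithinAt_univ.mp this
  · -- saturated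
    have hcond : P ≤ S * γ * a := ((one_lt_div hP).mp hgt).le
    rw [if_pos hcond]
    have hev : ∀ᶠ x in nhds γ, 1 < S * x * a / P := by
      have hcont : ContinuousAt (fun x : ℝ => S * x * a / P) γ := by fun_prop
      exact continuousAt_const.eventually_lt hcont hgt
    exact (aux_gB Kt S a c ha hc γ hγ).congr_of_eventuallyEq
      (hev.mono fun x hx => hB_eq x hx.le)

/-- The function
`f_1'(γ) = −r K_S log γ + K Σ_{i=1}^r log(γK/(γγ_i + λ̂_i(γ))) + K_S Σ_{i=1}^r log λ̂_i(γ)`,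
with `λ̂_i(γ) = max(K_S γγ_i/K_P, 1)`, is nondecreasing on `(0, ∞)`: its derivative is
strictly positive for `γ < (K_P/K_S)(1/γ_r)` and equals zero for `γ ≥ (K_P/K_S)(1/γ_r)`. -/
theorem stmt18 (K_P K_S r K : ℕ) (hK : K = K_P + K_S) (hr : 0 < r) (hrKP : r ≤ K_P)
    (hKS : 0 < K_S)
    (gam : ℕ → ℝ) (hanti : AntitoneOn gam (Set.Icc 1 r))
    (hpos : ∀ i, 1 ≤ i → i ≤ r → 0 < gam i)
    (f : ℝ → ℝ)
    (hf : ∀ γ : ℝ, 0 < γ →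
      f γ = -((r : ℝ) * K_S) * Real.log γ +
        (K : ℝ) * ∑ i ∈ Finset.Icc 1 r,
          Real.log (γ * K / (γ * gam i + max ((K_S : ℝ) * γ * gam i / K_P) 1)) +
        (K_S : ℝ) * ∑ i ∈ Finset.Icc 1 r, Real.log (max ((K_S : ℝ) * γ * gam i / K_P) 1)) :
    MonotoneOn f (Set.Ioi 0) ∧
    (∀ γ : ℝ, 0 < γ → γ < (K_P : ℝ) / K_S * (1 / gam r) → 0 < deriv f γ) ∧
    (∀ γ : ℝ, (K_P : ℝ) / K_S * (1 / gam r) ≤ γ → deriv f γ = 0) := by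
  have hP : (0:ℝ) < K_P := by
    have : 0 < K_P := lt_of_lt_of_le hr hrKP
    exact_mod_cast this
  have hS : (0:ℝ) < K_S := by exact_mod_cast hKS
  have hKt : (K:ℝ) = (K_P:ℝ) + (K_S:ℝ) := by exact_mod_cast hK
  have hgr : 0 < gam r := hpos r hr le_rfl
  -- derivative candidate
  have key : ∀ γ : ℝ, 0 < γ → HasDerivAt f
      ((∑ i ∈ Finset.Icc 1 r, if (K_P:ℝ) ≤ (K_S:ℝ) * γ * gam i then (K_S:ℝ) / γ
        else (K:ℝ) / (γ * (γ * gam i + 1))) + (-((r : ℝ) * K_S)) * γ⁻¹) γ := by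
    intro γ hγ
    have hsum : HasDerivAt (fun x => ∑ i ∈ Finset.Icc 1 r,
        ((K:ℝ) * Real.log (x * K / (x * gam i + max ((K_S : ℝ) * x * gam i / K_P) 1)) +
          (K_S:ℝ) * Real.log (max ((K_S : ℝ) * x * gam i / K_P) 1)))
        (∑ i ∈ Finset.Icc 1 r, if (K_P:ℝ) ≤ (K_S:ℝ) * γ * gam i then (K_S:ℝ) / γ
          else (K:ℝ) / (γ * (γ * gam i + 1))) γ := by
      apply HasDerivAt.fun_sum
      intro i hi
      rw [Finset.mem_Icc] at hi
      exact perIndex (K_P:ℝ) (K_S:ℝ) (K:ℝ) (gam i) hP hS (hpos i hi.1 hi.2) hKt γ hγ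
    have hlog : HasDerivAt (fun x => -((r : ℝ) * K_S) * Real.log x)
        (-((r : ℝ) * K_S) * γ⁻¹) γ :=
      (Real.hasDerivAt_log hγ.ne').const_mul _
    have hFull := hsum.add hlog
    refine hFull.congr_of_eventuallyEq ?_
    refine Filter.eventuallyEq_of_mem (Ioi_mem_nhds hγ) fun x hx => ?_
    simp only [Pi.add_apply]
    rw [hf x hx, Finset.mul_sum, Finset.mul_sum, Finset.sum_add_distrib]
    ring
  have hcard : (Finset.Icc 1 r).card = r := by
    rw [Nat.card_Icc]; omega
  -- pointwise bounds
  have hDge : ∀ γ : ℝ, 0 < γ → ∀ i ∈ Finset.Icc 1 r,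
      (K_S:ℝ) / γ ≤ (if (K_P:ℝ) ≤ (K_S:ℝ) * γ * gam i then (K_S:ℝ) / γ
        else (K:ℝ) / (γ * (γ * gam i + 1))) := by
    intro γ hγ i hi
    rw [Finset.mem_Icc] at hi
    have hgi : 0 < gam i := hpos i hi.1 hi.2
    split_ifs with h
    · exact le_rfl
    · push_neg at h
      rw [div_le_div_iff₀ hγ (by positivity)]
      rw [hKt]
      nlinarith
  have hDnonneg : ∀ γ : ℝ, 0 < γ →
      0 ≤ (∑ i ∈ Finset.Icc 1 r, if (K_P:ℝ) ≤ (K_S:ℝ) * γ * gam i then (K_S:ℝ) / γ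
        else (K:ℝ) / (γ * (γ * gam i + 1))) + (-((r : ℝ) * K_S)) * γ⁻¹ := by
    intro γ hγ
    have h1 := Finset.card_nsmul_le_sum (Finset.Icc 1 r)
      (fun i => if (K_P:ℝ) ≤ (K_S:ℝ) * γ * gam i then (K_S:ℝ) / γ
        else (K:ℝ) / (γ * (γ * gam i + 1))) ((K_S:ℝ) / γ) (hDge γ hγ)
    rw [hcard, nsmul_eq_mul] at h1
    have h2 : ((r : ℝ) * K_S) * γ⁻¹ = (r:ℝ) * ((K_S:ℝ) / γ) := by field_simp
    linarith
  refine ⟨?_, ?_, ?_⟩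
  · -- MonotoneOn
    apply monotoneOn_of_deriv_nonneg (convex_Ioi 0)
    · exact fun x hx => ((key x hx).continuousAt).continuousWithinAt
    · rw [interior_Ioi]
      exact fun x hx => ((key x hx).differentiableAt).differentiableWithinAt
    · rw [interior_Ioi]
      intro x hx
      rw [(key x hx).deriv]
      exact hDnonneg x hx
  · -- strict positivity
    intro γ hγ hlt
    rw [(key γ hγ).deriv]
    have hcond : (K_S:ℝ) * γ * gam r < K_P := by
      have h1 : γ * gam r < (K_P:ℝ) / K_S := by
        have := mul_lt_mul_of_pos_right hlt hgr
        rwa [mul_assoc, one_div, inv_mul_cancel₀ hgr.ne', mul_one] at this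
      calc (K_S:ℝ) * γ * gam r = K_S * (γ * gam r) := by ring
        _ < K_S * ((K_P:ℝ) / K_S) := by exact mul_lt_mul_of_pos_left h1 hS
        _ = K_P := by field_simp
    have hsum_lt : ∑ _i ∈ Finset.Icc 1 r, ((K_S:ℝ) / γ) <
        ∑ i ∈ Finset.Icc 1 r, (if (K_P:ℝ) ≤ (K_S:ℝ) * γ * gam i then (K_S:ℝ) / γ
          else (K:ℝ) / (γ * (γ * gam i + 1))) := by
      apply Finset.sum_lt_sum (hDge γ hγ)
      refine ⟨r, Finset.mem_Icc.mpr ⟨hr, le_rfl⟩, ?_⟩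
      rw [if_neg (not_le.mpr hcond)]
      rw [div_lt_div_iff₀ hγ (by positivity)]
      rw [hKt]
      nlinarith
    rw [Finset.sum_const, hcard, nsmul_eq_mul] at hsum_lt
    have h2 : ((r : ℝ) * K_S) * γ⁻¹ = (r:ℝ) * ((K_S:ℝ) / γ) := by field_simp
    linarith
  · -- zero derivative
    intro γ hγthr
    have hthrpos : 0 < (K_P : ℝ) / K_S * (1 / gam r) := by positivity
    have hγ : 0 < γ := lt_of_lt_of_le hthrpos hγthr
    rw [(key γ hγ).deriv]
    have hcond : ∀ i ∈ Finset.Icc 1 r, (K_P:ℝ) ≤ (K_S:ℝ) * γ * gam i := by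
      intro i hi
      rw [Finset.mem_Icc] at hi
      have hge : gam r ≤ gam i :=
        hanti (Set.mem_Icc.mpr ⟨hi.1, hi.2⟩) (Set.mem_Icc.mpr ⟨hr, le_rfl⟩) hi.2
      have h2 : (K_P : ℝ) / K_S * (1 / gam r) * (K_S * gam r) ≤ γ * (K_S * gam r) :=
        mul_le_mul_of_nonneg_right hγthr (by positivity)
      have h3 : (K_P : ℝ) / K_S * (1 / gam r) * (K_S * gam r) = K_P := by
        field_simp
      have h1 : (K_P:ℝ) ≤ (K_S:ℝ) * γ * gam r := by nlinarith [h2, h3]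
      calc (K_P:ℝ) ≤ (K_S:ℝ) * γ * gam r := h1
        _ ≤ (K_S:ℝ) * γ * gam i := by
            apply mul_le_mul_of_nonneg_left hge (by positivity)
    rw [Finset.sum_congr rfl (fun i hi => if_pos (hcond i hi))]
    rw [Finset.sum_const, hcard, nsmul_eq_mul]
    field_simp
    ring
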